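/- Let b ≥ 2 be an integer. The composite decimation map R : (k,m) ↦ (k',m') (defined on [0,∞)×ℝ via the Markov chain correspondence) satisfies, at the fixed point (k,m)=(0,0): the partial derivative of k' with respect to k (taken within k ≥ 0, along m = 0) equals b; the partial derivative of m' with respect to m (along k = 0) equals b; m'(k,0) = 0 for all 0 ≤ k < 1 and k'(0,m) = 0 for all m, so the off-diagonal partial derivatives ∂k'/∂m and ∂m'/∂k at (0,0) are 0. In other words the Jacobian matrix of (k',m') with respect to (k,m) at the fixed point is the diagonal matrix diag(b,b). -/

import Mathlib

/-- Transition probability `p = (S + sinh m)/(cosh m + S)` with `S = sqrt(sinh² m + k²)`. -/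
noncomputable def pIsing (k m : ℝ) : ℝ :=
  (Real.sqrt (Real.sinh m ^ 2 + k ^ 2) + Real.sinh m) /
    (Real.cosh m + Real.sqrt (Real.sinh m ^ 2 + k ^ 2))

/-- Transition probability `q = (S − sinh m)/(cosh m + S)` with `S = sqrt(sinh² m + k²)`. -/
noncomputable def qIsing (k m : ℝ) : ℝ :=
  (Real.sqrt (Real.sinh m ^ 2 + k ^ 2) - Real.sinh m) /
    (Real.cosh m + Real.sqrt (Real.sinh m ^ 2 + k ^ 2))

/-- Renormalized transition probability `p' = (p/(p+q)) (1 − (1−p−q)^b)`. -/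
noncomputable def pRen (b : ℕ) (k m : ℝ) : ℝ :=
  (pIsing k m / (pIsing k m + qIsing k m)) * (1 - (1 - pIsing k m - qIsing k m) ^ b)

/-- Renormalized transition probability `q' = (q/(p+q)) (1 − (1−p−q)^b)`. -/
noncomputable def qRen (b : ℕ) (k m : ℝ) : ℝ :=
  (qIsing k m / (pIsing k m + qIsing k m)) * (1 - (1 - pIsing k m - qIsing k m) ^ b)

/-- Renormalized Boltzmann factor `k' = sqrt(p'q'/((1−p')(1−q')))`. -/
noncomputable def kRen (b : ℕ) (k m : ℝ) : ℝ :=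
  Real.sqrt (pRen b k m * qRen b k m / ((1 - pRen b k m) * (1 - qRen b k m)))

/-- Renormalized magnetic field `m' = (1/2) log((1−q')/(1−p'))`. -/
noncomputable def mRen (b : ℕ) (k m : ℝ) : ℝ :=
  (1 / 2) * Real.log ((1 - qRen b k m) / (1 - pRen b k m))

open Real
-- p = q on the line m = 0
lemma pIsing_eq_qIsing (k : ℝ) : pIsing k 0 = qIsing k 0 := by
  simp [pIsing, qIsing]

lemma mRen_m0 (b : ℕ) (k : ℝ) : mRen b k 0 = 0 := by
  have h : pRen b k 0 = qRen b k 0 := by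
    simp [pRen, qRen, pIsing_eq_qIsing]
  rcases eq_or_ne (1 - qRen b k 0) 0 with h0 | h0
  · simp [mRen, h, h0]
  · simp [mRen, h, div_self h0]

lemma pIsing_m0 (k : ℝ) (hk : 0 ≤ k) : pIsing k 0 = k / (1 + k) := by
  simp [pIsing, show Real.sinh 0 ^ 2 + k ^ 2 = k ^ 2 by simp, Real.sqrt_sq hk]

-- sqrt at k = 0
lemma sqrt_sinh (m : ℝ) : Real.sqrt (Real.sinh m ^ 2 + 0 ^ 2) = |Real.sinh m| := by
  rw [show Real.sinh m ^ 2 + 0 ^ 2 = Real.sinh m ^ 2 by ring, Real.sqrt_sq_eq_abs]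

lemma kRen_k0 (b : ℕ) (m : ℝ) : kRen b 0 m = 0 := by
  rcases le_or_gt 0 (Real.sinh m) with hm | hm
  · have hq : qIsing 0 m = 0 := by
      simp only [qIsing]
      rw [sqrt_sinh, abs_of_nonneg hm, sub_self, zero_div]
    simp [kRen, qRen, hq]
  · have hp : pIsing 0 m = 0 := by
      simp only [pIsing]
      rw [sqrt_sinh, abs_of_nonpos hm.le, neg_add_cancel, zero_div]
    simp [kRen, pRen, hp]

lemma exp_mul_exp_neg (m : ℝ) : Real.exp m * Real.exp (-m) = 1 := by
  rw [← Real.exp_add]; simp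

lemma pIsing_0m (m : ℝ) (hm : 0 ≤ m) : pIsing 0 m = 1 - Real.exp (-(2 * m)) := by
  have hs : 0 ≤ Real.sinh m := Real.sinh_nonneg_iff.mpr hm
  simp only [pIsing]
  rw [sqrt_sinh, abs_of_nonneg hs]
  rw [show Real.sinh m + Real.sinh m = Real.cosh m + Real.sinh m - (Real.cosh m - Real.sinh m) by ring,
    Real.cosh_add_sinh, Real.cosh_sub_sinh]
  have h1 : Real.exp m ≠ 0 := Real.exp_ne_zero m
  have h2 : Real.exp (-(2*m)) * Real.exp m = Real.exp (-m) := by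
    rw [← Real.exp_add]; ring_nf
  field_simp
  ring_nf at h2 ⊢
  linear_combination h2

lemma qIsing_0m (m : ℝ) (hm : m ≤ 0) : qIsing 0 m = 1 - Real.exp (2 * m) := by
  have hs : Real.sinh m ≤ 0 := by simpa using Real.sinh_le_sinh.mpr hm
  simp only [qIsing]
  rw [sqrt_sinh, abs_of_nonpos hs]
  have e1 := Real.cosh_add_sinh m
  have e2 := Real.cosh_sub_sinh m
  have h2 : Real.exp (2*m) * Real.exp (-m) = Real.exp m := by
    rw [← Real.exp_add]; ring_nf
  rw [show Real.cosh m + -Real.sinh m = Real.exp (-m) from by linear_combination e2,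
    div_eq_iff (Real.exp_ne_zero _)]
  linear_combination e2 - e1 + h2

lemma mRen_0m (b : ℕ) (m : ℝ) : mRen b 0 m = b * m := by
  rcases lt_trichotomy m 0 with hm | hm | hm
  · -- m < 0 : p = 0, q = 1 - exp(2m)
    have hp : pIsing 0 m = 0 := by
      simp only [pIsing]
      rw [sqrt_sinh, abs_of_nonpos (by simpa using Real.sinh_le_sinh.mpr hm.le),
        neg_add_cancel, zero_div]
    have hq := qIsing_0m m hm.le
    have hqne : qIsing 0 m ≠ 0 := by
      rw [hq]
      have : Real.exp (2*m) < 1 := Real.exp_lt_one_iff.mpr (by linarith)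
      linarith
    have h1 : 1 - pIsing 0 m - qIsing 0 m = Real.exp (2*m) := by rw [hp, hq]; ring
    have hqr : qRen b 0 m = 1 - Real.exp (2*m) ^ b := by
      rw [qRen, h1, hp, zero_add, div_self hqne, one_mul]
    have hpr : pRen b 0 m = 0 := by
      simp only [pRen, hp, zero_div, zero_mul]
    rw [mRen, hpr, hqr]
    rw [show (1 : ℝ) - (1 - Real.exp (2*m) ^ b) = Real.exp (2*m) ^ b by ring]
    rw [← Real.exp_nat_mul, sub_zero, div_one, Real.log_exp]
    ring
  · rw [hm, mRen_m0, mul_zero]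
  · -- m > 0
    have hq : qIsing 0 m = 0 := by
      simp only [qIsing]
      rw [sqrt_sinh, abs_of_nonneg (Real.sinh_nonneg_iff.mpr hm.le), sub_self, zero_div]
    have hp := pIsing_0m m hm.le
    have hpne : pIsing 0 m ≠ 0 := by
      rw [hp]
      have : Real.exp (-(2*m)) < 1 := Real.exp_lt_one_iff.mpr (by linarith)
      linarith
    have h1 : 1 - pIsing 0 m - qIsing 0 m = Real.exp (-(2*m)) := by rw [hp, hq]; ring
    have hpr : pRen b 0 m = 1 - Real.exp (-(2*m)) ^ b := by
      rw [pRen, h1, hq, add_zero, div_self hpne, one_mul]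
    have hqr : qRen b 0 m = 0 := by
      simp only [qRen, hq, zero_div, zero_mul]
    rw [mRen, hpr, hqr]
    rw [show (1 : ℝ) - (1 - Real.exp (-(2*m)) ^ b) = Real.exp (-(2*m)) ^ b by ring]
    rw [← Real.exp_nat_mul, sub_zero, Real.log_div one_ne_zero (Real.exp_ne_zero _),
      Real.log_one, Real.log_exp]
    ring

noncomputable def gFun (b : ℕ) (k : ℝ) : ℝ :=
  (1 - ((1 - k) / (1 + k)) ^ b) / (1 + ((1 - k) / (1 + k)) ^ b)

lemma kRen_m0 (b : ℕ) (hb : 2 ≤ b) (k : ℝ) (hk : 0 ≤ k) : kRen b k 0 = gFun b k := by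
  rcases eq_or_lt_of_le hk with hk0 | hk0
  · -- k = 0
    rw [← hk0, kRen_k0]
    simp [gFun]
  · have h1k : (0:ℝ) < 1 + k := by linarith
    have hp : pIsing k 0 = k / (1 + k) := pIsing_m0 k hk
    have hq : qIsing k 0 = k / (1 + k) := by rw [← pIsing_eq_qIsing, hp]
    set t : ℝ := ((1 - k) / (1 + k)) ^ b with ht
    have htabs : |(1 - k) / (1 + k)| < 1 := by
      rw [abs_div, abs_of_pos h1k, div_lt_one h1k]
      rw [abs_lt]; constructor <;> linarith
    have htlt : |t| < 1 := by
      rw [ht, abs_pow]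
      exact pow_lt_one₀ (abs_nonneg _) htabs (by omega)
    have ht1 : 0 < 1 - t := by cases' abs_lt.mp htlt with h1 h2; linarith
    have ht2 : 0 < 1 + t := by cases' abs_lt.mp htlt with h1 h2; linarith
    have hsum : pIsing k 0 + qIsing k 0 ≠ 0 := by
      rw [hp, hq]
      have : 0 < k / (1 + k) := div_pos hk0 h1k
      linarith
    have hdiv : pIsing k 0 / (pIsing k 0 + qIsing k 0) = 1/2 := by
      rw [hp, hq]
      have hxne : k / (1 + k) ≠ 0 := ne_of_gt (div_pos hk0 h1k)
      rw [show k/(1+k) + k/(1+k) = 2*(k/(1+k)) by ring,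
        div_eq_iff (mul_ne_zero two_ne_zero hxne)]
      ring
    have hone : 1 - pIsing k 0 - qIsing k 0 = (1 - k) / (1 + k) := by
      rw [hp, hq]; field_simp; ring
    have hpr : pRen b k 0 = (1 - t) / 2 := by
      rw [pRen, hdiv, hone, ← ht]; ring
    have hqr : qRen b k 0 = (1 - t) / 2 := by
      have hpq : qRen b k 0 = pRen b k 0 := by
        simp only [pRen, qRen, pIsing_eq_qIsing]
      rw [hpq, hpr]
    have harg : pRen b k 0 * qRen b k 0 / ((1 - pRen b k 0) * (1 - qRen b k 0))
        = ((1 - t)/(1 + t)) ^ 2 := by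
      rw [hpr, hqr]
      rw [show (1:ℝ) - (1 - t)/2 = (1 + t)/2 by ring]
      rw [div_pow]
      rw [div_eq_div_iff (by positivity) (by positivity)]
      ring
    rw [kRen, harg, Real.sqrt_sq (by positivity), gFun, ← ht]

lemma hasDerivAt_tFun : HasDerivAt (fun k : ℝ => (1 - k) / (1 + k)) (-2) 0 := by
  have h1 : HasDerivAt (fun k : ℝ => 1 - k) (-1) 0 := by
    simpa using (hasDerivAt_id (0:ℝ)).const_sub 1
  have h2 : HasDerivAt (fun k : ℝ => 1 + k) 1 0 := by
    simpa using (hasDerivAt_id (0:ℝ)).const_add 1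
  have := h1.div h2 (by norm_num)
  exact this.congr_deriv (by norm_num)

lemma hasDerivAt_gFun (b : ℕ) (hb : 2 ≤ b) : HasDerivAt (gFun b) (b : ℝ) 0 := by
  have ht : HasDerivAt (fun k : ℝ => ((1 - k) / (1 + k)) ^ b) (-2 * b) 0 := by
    have := hasDerivAt_tFun.pow b
    exact this.congr_deriv (by norm_num <;> ring)
  have hnum : HasDerivAt (fun k : ℝ => 1 - ((1 - k) / (1 + k)) ^ b) (2 * b) 0 := by
    simpa using ht.const_sub 1
  have hden : HasDerivAt (fun k : ℝ => 1 + ((1 - k) / (1 + k)) ^ b) (-2 * b) 0 := by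
    simpa using ht.const_add 1
  have hden0 : (1 : ℝ) + ((1 - (0:ℝ)) / (1 + 0)) ^ b ≠ 0 := by norm_num
  have := hnum.div hden hden0
  exact this.congr_deriv (by norm_num <;> ring)

/-- **Universality conjecture at the fixed point.**  For the decimation map
`R : (k,m) ↦ (k',m')` with blocking factor `b ≥ 2`, at the fixed point `(0,0)`:
`∂k'/∂k = b` (within `k ≥ 0`, along `m = 0`), `∂m'/∂m = b` (along `k = 0`),
`m'(k,0) = 0` for `0 ≤ k < 1` and `k'(0,m) = 0` for all `m`, so the off-diagonal
partials vanish; i.e. the Jacobian of `R` at `(0,0)` is `diag(b,b)`. -/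
theorem universality_fixed_point (b : ℕ) (hb : 2 ≤ b) :
    HasDerivWithinAt (fun k : ℝ => kRen b k 0) (b : ℝ) (Set.Ici 0) 0 ∧
    HasDerivAt (fun m : ℝ => mRen b 0 m) (b : ℝ) 0 ∧
    (∀ k : ℝ, 0 ≤ k → k < 1 → mRen b k 0 = 0) ∧
    (∀ m : ℝ, kRen b 0 m = 0) ∧
    HasDerivWithinAt (fun k : ℝ => mRen b k 0) 0 (Set.Ici 0) 0 ∧
    HasDerivAt (fun m : ℝ => kRen b 0 m) 0 0 := by
  refine ⟨?_, ?_, ?_, ?_, ?_, ?_⟩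
  · exact ((hasDerivAt_gFun b hb).hasDerivWithinAt).congr
      (fun k hk => kRen_m0 b hb k hk) (kRen_m0 b hb 0 le_rfl)
  · have h : (fun m : ℝ => mRen b 0 m) = fun m : ℝ => (b : ℝ) * m :=
      funext (mRen_0m b)
    rw [h]
    simpa using (hasDerivAt_id (0:ℝ)).const_mul (b : ℝ)
  · exact fun k _ _ => mRen_m0 b k
  · exact kRen_k0 b
  · have h : (fun k : ℝ => mRen b k 0) = fun _ : ℝ => (0:ℝ) :=
      funext (mRen_m0 b)
    rw [h]
    exact (hasDerivAt_const 0 0).hasDerivWithinAt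
  · have h : (fun m : ℝ => kRen b 0 m) = fun _ : ℝ => (0:ℝ) :=
      funext (kRen_k0 b)
    rw [h]
    exact hasDerivAt_const 0 0
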